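/- arXiv:1702.05978 — 2 statements merged into one kernel-verified Lean document; each statement's English description precedes it below -/
import Mathlib

section
/- For k ≥ 1, u ∈ ℂ with |u| = 1, u = e^{ic} with c ∈ ℝ, v ∈ ℂ with |v| = 1, and l ∈ {0,…,k−1}, define e_l(z) = u^{kz/(2π)} Σ_{j∈ℤ} (v^{−k} e^{−l − kj/2} u^{ik/(2π)})^j e^{i(l+jk)z}. Then the series converges absolutely and locally uniformly on ℂ, and e_l is an entire function. -/
open Complex Filter

/-- The series defining the basis vector `e_l` of `H_k` converges absolutely and
locally uniformly on `ℂ`, and `e_l` is an entire function. Here `u = e^{ic}` and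
`u^{ik/(2π)} = e^{-ck/(2π)}`. -/
theorem e_l_entire (k : ℕ) (hk : 1 ≤ k) (c : ℝ) (v : ℂ) (hv : ‖v‖ = 1)
    (l : ℕ) (hl : l < k)
    (term : ℤ → ℂ → ℂ)
    (hterm : ∀ (j : ℤ) (z : ℂ),
      term j z =
        (v ^ (-(k : ℤ)) * Complex.exp (-(l : ℂ) - (k : ℂ) * j / 2) *
            Complex.exp (-((c : ℂ) * k / (2 * Real.pi)))) ^ j *
          Complex.exp (Complex.I * ((l : ℂ) + j * k) * z))
    (e_l : ℂ → ℂ)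
    (he_l : ∀ z : ℂ,
      e_l z = Complex.exp (Complex.I * c * k * z / (2 * Real.pi)) * ∑' j : ℤ, term j z) :
    (∀ z : ℂ, Summable fun j : ℤ => ‖term j z‖) ∧
    TendstoLocallyUniformly
      (fun (s : Finset ℤ) (z : ℂ) =>
        Complex.exp (Complex.I * c * k * z / (2 * Real.pi)) * ∑ j ∈ s, term j z)
      e_l atTop ∧
    Differentiable ℂ e_l := by
  have hπ : (0:ℝ) < Real.pi := Real.pi_pos
  have hv0 : v ≠ 0 := by intro h; simp [h] at hv
  -- exact norm of each term
  have hnorm : ∀ (j : ℤ) (z : ℂ), ‖term j z‖ =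
      Real.exp ((j:ℝ) * (-(l : ℝ) - k * j / 2 - c * k / (2 * Real.pi))
        - ((l : ℝ) + j * k) * z.im) := by
    intro j z
    rw [hterm]
    rw [mul_assoc, ← Complex.exp_add, mul_zpow, ← Complex.exp_int_mul, norm_mul, norm_mul,
      norm_zpow, norm_zpow, hv, one_zpow, one_zpow, one_mul,
      Complex.norm_exp, Complex.norm_exp, ← Real.exp_add]
    congr 1
    simp [Complex.mul_re, Complex.add_re, Complex.add_im, Complex.mul_im, Complex.div_re,
      Complex.div_im, Complex.normSq]
    field_simp
    ring
  -- summable bound on closed balls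
  have key : ∀ R : ℝ, 0 ≤ R → ∃ u : ℤ → ℝ, Summable u ∧ (∀ j, 0 ≤ u j) ∧
      ∀ (j : ℤ) (z : ℂ), ‖z‖ ≤ R → ‖term j z‖ ≤ u j := by
    intro R hR
    set a : ℝ := c * k / (2 * Real.pi) with ha
    set D : ℝ := (l : ℝ) + |a| + k * R with hD
    set T : ℝ := (k : ℝ) / (2 * Real.pi) with hT
    have hT0 : 0 < T := by
      apply div_pos _ (by positivity)
      exact_mod_cast Nat.lt_of_lt_of_le Nat.zero_lt_one hk
    set S : ℝ := D / (2 * Real.pi) with hS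
    refine ⟨fun j => Real.exp ((l:ℝ) * R) *
      ((|j| ^ 0 : ℝ) * Real.exp (-Real.pi * (T * j ^ 2 - 2 * S * |j|))), ?_, ?_, ?_⟩
    · exact (summable_pow_mul_jacobiTheta₂_term_bound S hT0 0).mul_left _
    · intro j; positivity
    · intro j z hz
      have him : |z.im| ≤ R := le_trans (Complex.abs_im_le_norm z) hz
      rw [hnorm]
      simp only [pow_zero, one_mul, ← Real.exp_add]
      apply Real.exp_le_exp.2
      have hπT : Real.pi * T = (k:ℝ) / 2 := by rw [hT]; field_simp
      have hπS : 2 * Real.pi * S = D := by rw [hS]; field_simp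
      have e1 : (j:ℝ) * (-(l:ℝ) - a - k * z.im) ≤ |(j:ℝ)| * D := by
        calc (j:ℝ) * (-(l:ℝ) - a - k * z.im) ≤ |(j:ℝ) * (-(l:ℝ) - a - k * z.im)| :=
              le_abs_self _
          _ = |(j:ℝ)| * |(-(l:ℝ) - a - k * z.im)| := abs_mul _ _
          _ ≤ |(j:ℝ)| * D := by
              apply mul_le_mul_of_nonneg_left _ (abs_nonneg _)
              rw [abs_le]
              have h1 := le_abs_self a
              have h2 := neg_abs_le a
              have h3 := abs_le.1 him
              have h4 : (0:ℝ) ≤ (l:ℝ) := Nat.cast_nonneg l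
              have h5 : (0:ℝ) ≤ (k:ℝ) := Nat.cast_nonneg k
              constructor <;> nlinarith
      have e2 : -(l:ℝ) * z.im ≤ (l:ℝ) * R := by
        have h3 := abs_le.1 him
        have h4 : (0:ℝ) ≤ (l:ℝ) := Nat.cast_nonneg l
        nlinarith
      have habs : |(j:ℝ)| = ((|j| : ℤ) : ℝ) := by
        rw [Int.cast_abs]
      have : -Real.pi * (T * (j:ℝ) ^ 2 - 2 * S * ((|j|:ℤ):ℝ))
          = -(Real.pi * T) * (j:ℝ)^2 + (2 * Real.pi * S) * |(j:ℝ)| := by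
        rw [habs]; ring
      rw [this, hπT, hπS]
      have expand : (j:ℝ) * (-(l : ℝ) - k * j / 2 - a) - ((l : ℝ) + j * k) * z.im
          = -((k:ℝ)/2) * (j:ℝ)^2 + ((j:ℝ) * (-(l:ℝ) - a - k * z.im)) + (-(l:ℝ) * z.im) := by
        ring
      rw [expand]
      clear_value a D T S
      linarith [e1, e2]
  -- summability pointwise
  have hsummable : ∀ z : ℂ, Summable fun j : ℤ => ‖term j z‖ := by
    intro z
    obtain ⟨u, hu, hu0, hub⟩ := key ‖z‖ (norm_nonneg z)
    exact hu.of_nonneg_of_le (fun j => norm_nonneg _) (fun j => hub j z le_rfl)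
  -- the exponential prefactor
  set g : ℂ → ℂ := fun z => Complex.exp (Complex.I * c * k * z / (2 * Real.pi)) with hg
  have hgnorm : ∀ (R : ℝ) (z : ℂ), ‖z‖ ≤ R →
      ‖g z‖ ≤ Real.exp (|c * (k:ℝ) / (2 * Real.pi)| * R) := by
    intro R z hz
    have hrw : Complex.I * (c:ℂ) * (k:ℂ) * z / (2 * Real.pi)
        = ((c * (k:ℝ) / (2 * Real.pi) : ℝ) : ℂ) * (Complex.I * z) := by
      push_cast; ring
    rw [hg, Complex.norm_exp, hrw]
    apply Real.exp_le_exp.2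
    rw [Complex.re_ofReal_mul]
    calc c * (k:ℝ) / (2 * Real.pi) * (Complex.I * z).re
        ≤ |c * (k:ℝ) / (2 * Real.pi) * (Complex.I * z).re| := le_abs_self _
      _ = |c * (k:ℝ) / (2 * Real.pi)| * |(Complex.I * z).re| := abs_mul _ _
      _ ≤ |c * (k:ℝ) / (2 * Real.pi)| * R := by
          apply mul_le_mul_of_nonneg_left _ (abs_nonneg _)
          have : (Complex.I * z).re = -z.im := by simp
          rw [this, abs_neg]
          exact le_trans (Complex.abs_im_le_norm z) hz
  -- locally uniform convergence
  have hTLU : TendstoLocallyUniformly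
      (fun (s : Finset ℤ) (z : ℂ) => g z * ∑ j ∈ s, term j z) e_l atTop := by
    rw [tendstoLocallyUniformly_iff_forall_isCompact]
    intro K hK
    obtain ⟨R0, hR0⟩ := hK.isBounded.subset_closedBall 0
    set R := max R0 0 with hRdef
    have hR : (0:ℝ) ≤ R := le_max_right _ _
    have hKR : K ⊆ Metric.closedBall 0 R :=
      hR0.trans (Metric.closedBall_subset_closedBall (le_max_left _ _))
    obtain ⟨u, hu, hu0, hub⟩ := key R hR
    set M : ℝ := Real.exp (|c * (k:ℝ) / (2 * Real.pi)| * R) with hM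
    have h1 : TendstoUniformlyOn
        (fun (s : Finset ℤ) (z : ℂ) => ∑ j ∈ s, g z * term j z)
        (fun z => ∑' j : ℤ, g z * term j z) atTop (Metric.closedBall 0 R) := by
      apply tendstoUniformlyOn_tsum (hu.mul_left M)
      intro j z hz
      rw [Metric.mem_closedBall, dist_zero_right] at hz
      rw [norm_mul]
      exact mul_le_mul (hgnorm R z hz) (hub j z hz) (norm_nonneg _) (Real.exp_nonneg _)
    have h2 : TendstoUniformlyOn
        (fun (s : Finset ℤ) (z : ℂ) => g z * ∑ j ∈ s, term j z)
        (fun z => ∑' j : ℤ, g z * term j z) atTop (Metric.closedBall 0 R) := by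
      apply h1.congr
      filter_upwards with s
      intro z hz
      exact (Finset.mul_sum _ _ _).symm
    have h3 : TendstoUniformlyOn
        (fun (s : Finset ℤ) (z : ℂ) => g z * ∑ j ∈ s, term j z)
        e_l atTop (Metric.closedBall 0 R) := by
      apply h2.congr_right
      intro z hz
      show ∑' j : ℤ, g z * term j z = e_l z
      rw [tsum_mul_left, he_l]
    exact h3.mono hKR
  refine ⟨hsummable, hTLU, ?_⟩
  -- differentiability
  rw [← tendstoLocallyUniformlyOn_univ] at hTLU
  have hdiff : ∀ s : Finset ℤ, DifferentiableOn ℂ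
      (fun z : ℂ => g z * ∑ j ∈ s, term j z) Set.univ := by
    intro s
    apply Differentiable.differentiableOn
    apply Differentiable.mul
    · apply Differentiable.cexp
      fun_prop
    · apply Differentiable.fun_sum
      intro j hj
      have hteq : term j = fun z => (v ^ (-(k : ℤ)) * Complex.exp (-(l : ℂ) - (k : ℂ) * j / 2) *
            Complex.exp (-((c : ℂ) * k / (2 * Real.pi)))) ^ j *
          Complex.exp (Complex.I * ((l : ℂ) + j * k) * z) := funext (hterm j)
      rw [hteq]
      apply Differentiable.const_mul
      apply Differentiable.cexp
      fun_prop
  have := hTLU.differentiableOn (Eventually.of_forall hdiff) isOpen_univ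
  exact differentiableOn_univ.mp this
end

section
/- For k ≥ 1, u = e^{ic} with c ∈ ℝ, |v| = 1, and l ∈ {0,…,k−1}, the entire function e_l(z) = e^{ickz/(2π)} Σ_{j∈ℤ} (v^{−k} e^{−l−kj/2} e^{ick/(2π)·i})^j e^{i(l+jk)z} satisfies the quasi-periodicity relations e_l(z + 2π) = u^k e_l(z) and e_l(z + i) = v^k e^{−ikz + k/2} e_l(z) for all z ∈ ℂ. -/
open Complex

/-- Quasi-periodicity of the basis functions `e_l`:
`e_l(z+2π) = u^k e_l(z)` and `e_l(z+i) = v^k e^{−ikz+k/2} e_l(z)`,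
where `u = e^{ic}` and `u^{ik/(2π)} = e^{ick/(2π)·i}`. -/
theorem e_l_quasi_periodic (k : ℕ) (hk : 1 ≤ k) (c : ℝ) (u v : ℂ)
    (hu : u = Complex.exp (Complex.I * c)) (hv : ‖v‖ = 1)
    (l : ℕ) (hl : l < k)
    (e_l : ℂ → ℂ)
    (he_l : ∀ z : ℂ,
      e_l z = Complex.exp (Complex.I * c * k * z / (2 * Real.pi)) *
        ∑' j : ℤ,
          (v ^ (-(k : ℤ)) * Complex.exp (-(l : ℂ) - (k : ℂ) * j / 2) *
              Complex.exp (Complex.I * c * k / (2 * Real.pi) * Complex.I)) ^ j *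
            Complex.exp (Complex.I * ((l : ℂ) + j * k) * z)) :
    ∀ z : ℂ,
      e_l (z + 2 * Real.pi) = u ^ k * e_l z ∧
      e_l (z + Complex.I) =
        v ^ k * Complex.exp (-Complex.I * k * z + k / 2) * e_l z := by
  have hπ : (Real.pi : ℂ) ≠ 0 := by
    exact_mod_cast Complex.ofReal_ne_zero.mpr Real.pi_ne_zero
  have hv0 : v ≠ 0 := by
    intro h; rw [h] at hv; simp at hv
  set w : ℂ := v ^ (-(k : ℤ)) with hw
  have hw0 : w ≠ 0 := zpow_ne_zero _ hv0
  have hvk : v ^ k * w = 1 := by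
    rw [hw, ← zpow_natCast v k, ← zpow_add₀ hv0]
    simp
  set B : ℂ := Complex.I * c * k / (2 * Real.pi) * Complex.I with hB
  -- the base expansion
  have hbase : ∀ (m : ℤ),
      (v ^ (-(k : ℤ)) * Complex.exp (-(l : ℂ) - (k : ℂ) * m / 2) *
          Complex.exp B) ^ m
        = w ^ m * Complex.exp ((m : ℂ) * (-(l : ℂ) - (k : ℂ) * m / 2) + (m : ℂ) * B) := by
    intro m
    rw [mul_zpow, mul_zpow, ← Complex.exp_int_mul, ← Complex.exp_int_mul,
      mul_assoc, ← Complex.exp_add, hw]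
  intro z
  constructor
  · -- period 2π
    rw [he_l, he_l, hu, ← Complex.exp_nat_mul]
    have hsum : (∑' j : ℤ,
        (v ^ (-(k : ℤ)) * Complex.exp (-(l : ℂ) - (k : ℂ) * j / 2) *
            Complex.exp B) ^ j *
          Complex.exp (Complex.I * ((l : ℂ) + j * k) * (z + 2 * Real.pi)))
        = ∑' j : ℤ,
        (v ^ (-(k : ℤ)) * Complex.exp (-(l : ℂ) - (k : ℂ) * j / 2) *
            Complex.exp B) ^ j *
          Complex.exp (Complex.I * ((l : ℂ) + j * k) * z) := by
      refine tsum_congr fun j => ?_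
      have harg : Complex.I * ((l : ℂ) + j * k) * (z + 2 * Real.pi)
          = Complex.I * ((l : ℂ) + j * k) * z
            + (((l : ℤ) + j * k : ℤ) : ℂ) * (2 * Real.pi * Complex.I) := by
        push_cast; ring
      rw [harg, Complex.exp_add, Complex.exp_int_mul_two_pi_mul_I, mul_one]
    rw [hsum]
    have hpre : Complex.I * c * k * (z + 2 * Real.pi) / (2 * Real.pi)
        = Complex.I * c * k * z / (2 * Real.pi) + (k : ℂ) * (Complex.I * c) := by
      field_simp
    rw [hpre, Complex.exp_add]
    ring
  · -- period i
    rw [he_l, he_l]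
    set P : ℂ := Complex.I * c * k * z / (2 * Real.pi) with hP
    set Q : ℂ := -Complex.I * k * z + k / 2 with hQ
    have hP' : Complex.I * c * k * (z + Complex.I) / (2 * Real.pi) = P + B := by
      rw [hP, hB]; field_simp
    rw [hP']
    have key : ∀ j : ℤ,
        Complex.exp (P + B) *
          ((v ^ (-(k : ℤ)) * Complex.exp (-(l : ℂ) - (k : ℂ) * j / 2) *
              Complex.exp B) ^ j *
            Complex.exp (Complex.I * ((l : ℂ) + j * k) * (z + Complex.I)))
        = (v ^ k * Complex.exp Q * Complex.exp P) *
          ((v ^ (-(k : ℤ)) * Complex.exp (-(l : ℂ) - (k : ℂ) * ((j + 1 : ℤ) : ℂ) / 2) *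
              Complex.exp B) ^ (j + 1) *
            Complex.exp (Complex.I * ((l : ℂ) + (j + 1 : ℤ) * k) * z)) := by
      intro j
      have h1 : ((j + 1 : ℤ) : ℂ) = (j : ℂ) + 1 := by push_cast; ring
      rw [hbase j, hbase (j + 1), zpow_add_one₀ hw0]
      have hexp : Complex.exp (P + B) *
          Complex.exp ((j : ℂ) * (-(l : ℂ) - (k : ℂ) * j / 2) + (j : ℂ) * B) *
          Complex.exp (Complex.I * ((l : ℂ) + j * k) * (z + Complex.I))
          = Complex.exp Q * Complex.exp P *
            Complex.exp (((j + 1 : ℤ) : ℂ) * (-(l : ℂ) - (k : ℂ) * ((j + 1 : ℤ) : ℂ) / 2)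
              + ((j + 1 : ℤ) : ℂ) * B) *
            Complex.exp (Complex.I * ((l : ℂ) + (j + 1 : ℤ) * k) * z) := by
        rw [← Complex.exp_add, ← Complex.exp_add, ← Complex.exp_add, ← Complex.exp_add,
          ← Complex.exp_add]
        congr 1
        rw [h1, hQ, hB]
        push_cast
        linear_combination ((l : ℂ) + j * k) * Complex.I_mul_I
      calc Complex.exp (P + B) *
            (w ^ j * Complex.exp ((j : ℂ) * (-(l : ℂ) - (k : ℂ) * j / 2) + (j : ℂ) * B) *
              Complex.exp (Complex.I * ((l : ℂ) + j * k) * (z + Complex.I)))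
          = w ^ j * (Complex.exp (P + B) *
              Complex.exp ((j : ℂ) * (-(l : ℂ) - (k : ℂ) * j / 2) + (j : ℂ) * B) *
              Complex.exp (Complex.I * ((l : ℂ) + j * k) * (z + Complex.I))) := by ring
        _ = w ^ j * (Complex.exp Q * Complex.exp P *
              Complex.exp (((j + 1 : ℤ) : ℂ) * (-(l : ℂ) - (k : ℂ) * ((j + 1 : ℤ) : ℂ) / 2)
                + ((j + 1 : ℤ) : ℂ) * B) *
              Complex.exp (Complex.I * ((l : ℂ) + (j + 1 : ℤ) * k) * z)) := by rw [hexp]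
        _ = (v ^ k * Complex.exp Q * Complex.exp P) *
            (w ^ j * w *
              Complex.exp (((j + 1 : ℤ) : ℂ) * (-(l : ℂ) - (k : ℂ) * ((j + 1 : ℤ) : ℂ) / 2)
                + ((j + 1 : ℤ) : ℂ) * B) *
              Complex.exp (Complex.I * ((l : ℂ) + (j + 1 : ℤ) * k) * z)) := by
            have := hvk
            linear_combination (-(w ^ j) *
              Complex.exp (((j + 1 : ℤ) : ℂ) * (-(l : ℂ) - (k : ℂ) * ((j + 1 : ℤ) : ℂ) / 2)
                + ((j + 1 : ℤ) : ℂ) * B) *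
              Complex.exp (Complex.I * ((l : ℂ) + (j + 1 : ℤ) * k) * z) *
              Complex.exp Q * Complex.exp P) * this
    calc Complex.exp (P + B) * ∑' j : ℤ,
          (v ^ (-(k : ℤ)) * Complex.exp (-(l : ℂ) - (k : ℂ) * j / 2) *
              Complex.exp B) ^ j *
            Complex.exp (Complex.I * ((l : ℂ) + j * k) * (z + Complex.I))
        = ∑' j : ℤ, Complex.exp (P + B) *
            ((v ^ (-(k : ℤ)) * Complex.exp (-(l : ℂ) - (k : ℂ) * j / 2) *
                Complex.exp B) ^ j *
              Complex.exp (Complex.I * ((l : ℂ) + j * k) * (z + Complex.I))) :=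
        tsum_mul_left.symm
      _ = ∑' j : ℤ, (v ^ k * Complex.exp Q * Complex.exp P) *
            ((v ^ (-(k : ℤ)) * Complex.exp (-(l : ℂ) - (k : ℂ) * (((j : ℤ) + 1 : ℤ) : ℂ) / 2) *
                Complex.exp B) ^ ((j : ℤ) + 1) *
              Complex.exp (Complex.I * ((l : ℂ) + ((j : ℤ) + 1 : ℤ) * k) * z)) :=
        tsum_congr key
      _ = ∑' j : ℤ, (v ^ k * Complex.exp Q * Complex.exp P) *
            ((v ^ (-(k : ℤ)) * Complex.exp (-(l : ℂ) - (k : ℂ) * j / 2) *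
                Complex.exp B) ^ j *
              Complex.exp (Complex.I * ((l : ℂ) + j * k) * z)) :=
        (Equiv.addRight (1 : ℤ)).tsum_eq fun j => (v ^ k * Complex.exp Q * Complex.exp P) *
            ((v ^ (-(k : ℤ)) * Complex.exp (-(l : ℂ) - (k : ℂ) * j / 2) *
                Complex.exp B) ^ j *
              Complex.exp (Complex.I * ((l : ℂ) + j * k) * z))
      _ = v ^ k * Complex.exp Q * (Complex.exp P * ∑' j : ℤ,
            (v ^ (-(k : ℤ)) * Complex.exp (-(l : ℂ) - (k : ℂ) * j / 2) *
                Complex.exp B) ^ j *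
              Complex.exp (Complex.I * ((l : ℂ) + j * k) * z)) := by
        rw [tsum_mul_left]; ring
end
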